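/- Let N ≥ 1. The set of real symplectic 2N×2N matrices S such that every positive real eigenvalue of S has geometric multiplicity at most 1 (i.e. for every real λ > 0, dim ker(S − λ·I) ≤ 1) is an open subset of the real symplectic group Sp(2N, ℝ), in the subspace topology induced from the space of 2N×2N real matrices. -/

import Mathlib

open Matrix

section Aux

open Module LinearMap Filter Topology

set_option linter.unusedSectionVars false

variable {ι : Type*} [Fintype ι] [DecidableEq ι]

/-- The linear equivalence between Euclidean space and the plain pi type. -/
noncomputable def sympAuxEqv (ι : Type*) [Fintype ι] :
    EuclideanSpace ℝ ι ≃ₗ[ℝ] (ι → ℝ) :=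
  WithLp.linearEquiv 2 ℝ (ι → ℝ)

/-- `mulVec` by a matrix, viewed as a linear map on Euclidean space. -/
noncomputable def sympEmap (A : Matrix ι ι ℝ) :
    EuclideanSpace ℝ ι →ₗ[ℝ] EuclideanSpace ℝ ι :=
  (sympAuxEqv ι).symm.toLinearMap ∘ₗ A.mulVecLin ∘ₗ (sympAuxEqv ι).toLinearMap

lemma sympEmap_apply (A : Matrix ι ι ℝ) (x : EuclideanSpace ℝ ι) :
    sympEmap A x = (sympAuxEqv ι).symm (A *ᵥ (sympAuxEqv ι x)) := rfl

lemma finrank_ker_sympEmap (A : Matrix ι ι ℝ) :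
    finrank ℝ (LinearMap.ker (sympEmap A)) = finrank ℝ (LinearMap.ker A.mulVecLin) := by
  have h : LinearMap.ker (sympEmap A)
      = (LinearMap.ker A.mulVecLin).map
        (((sympAuxEqv ι).symm : (ι → ℝ) ≃ₗ[ℝ] EuclideanSpace ℝ ι) : (ι → ℝ) →ₗ[ℝ] EuclideanSpace ℝ ι) := by
    ext x
    simp only [sympEmap_apply, LinearMap.mem_ker, Submodule.mem_map_equiv,
      LinearEquiv.symm_symm, Matrix.mulVecLin_apply, EmbeddingLike.map_eq_zero_iff,
      Submodule.mem_map]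
    constructor
    · intro h
      exact ⟨sympAuxEqv ι x, h, by simp⟩
    · rintro ⟨y, hy, rfl⟩
      simpa using hy
  rw [h]
  exact LinearEquiv.finrank_map_eq _ _

lemma sympEmap_mul (A B : Matrix ι ι ℝ) (x : EuclideanSpace ℝ ι) :
    sympEmap (A * B) x = sympEmap A (sympEmap B x) := by
  simp [sympEmap_apply, Matrix.mulVec_mulVec]

lemma sympEmap_one (x : EuclideanSpace ℝ ι) : sympEmap (1 : Matrix ι ι ℝ) x = x := by
  simp [sympEmap_apply]

lemma sympEmap_sub (A B : Matrix ι ι ℝ) (x : EuclideanSpace ℝ ι) :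
    sympEmap (A - B) x = sympEmap A x - sympEmap B x := by
  simp [sympEmap_apply, Matrix.sub_mulVec]

lemma sympEmap_smul_one (t : ℝ) (x : EuclideanSpace ℝ ι) :
    sympEmap (t • (1 : Matrix ι ι ℝ)) x = t • x := by
  simp [sympEmap_apply, Matrix.smul_mulVec]

/-- The continuous linear map version. -/
noncomputable def sympEmapCLM (A : Matrix ι ι ℝ) :
    EuclideanSpace ℝ ι →L[ℝ] EuclideanSpace ℝ ι :=
  LinearMap.toContinuousLinearMap (sympEmap A)

lemma sympEmapCLM_apply (A : Matrix ι ι ℝ) (x : EuclideanSpace ℝ ι) :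
    sympEmapCLM A x = sympEmap A x := rfl

lemma continuous_sympEmapCLM :
    Continuous fun A : Matrix ι ι ℝ =>
      (sympEmapCLM A : EuclideanSpace ℝ ι →L[ℝ] EuclideanSpace ℝ ι) := by
  let Φ : Matrix ι ι ℝ →ₗ[ℝ] (EuclideanSpace ℝ ι →L[ℝ] EuclideanSpace ℝ ι) :=
    { toFun := sympEmapCLM
      map_add' := by
        intro A B
        ext x
        simp [sympEmapCLM, sympEmap_apply, Matrix.add_mulVec]
      map_smul' := by
        intro c A
        ext x
        simp [sympEmapCLM, sympEmap_apply, Matrix.smul_mulVec] }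
  exact Φ.continuous_of_finiteDimensional

end Aux

set_option maxHeartbeats 2000000 in
lemma symp_isOpen_aux {ι : Type*} [Fintype ι] [DecidableEq ι] (Jm : Matrix ι ι ℝ)
    (hJ2 : Jm * Jm = -1) :
    IsOpen {S : {A : Matrix ι ι ℝ // Aᵀ * Jm * A = Jm} |
      ∀ lam : ℝ, 0 < lam →
        Module.finrank ℝ ↥(LinearMap.ker
          ((S : Matrix ι ι ℝ) - lam • (1 : Matrix ι ι ℝ)).mulVecLin) ≤ 1} := by

  classical
  haveI : FirstCountableTopology (Matrix ι ι ℝ) :=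
    inferInstanceAs (FirstCountableTopology (ι → ι → ℝ))
  rw [← isClosed_compl_iff]
  apply IsSeqClosed.isClosed
  intro f S hmem htend
  simp only [Set.mem_compl_iff, Set.mem_setOf_eq] at hmem ⊢
  push_neg at hmem ⊢
  choose lam hpos hrank using hmem
  -- kernels in Euclidean space
  have hdim : ∀ n, 1 < Module.finrank ℝ
      (LinearMap.ker (sympEmap ((f n : Matrix ι ι ℝ) - lam n • 1))) := by
    intro n
    rw [finrank_ker_sympEmap]
    exact hrank n
  -- orthonormal pairs in the kernels
  have hpair : ∀ n, ∃ v w : EuclideanSpace ℝ ι,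
      v ∈ LinearMap.ker (sympEmap ((f n : Matrix ι ι ℝ) - lam n • 1)) ∧
      w ∈ LinearMap.ker (sympEmap ((f n : Matrix ι ι ℝ) - lam n • 1)) ∧
      ‖v‖ = 1 ∧ ‖w‖ = 1 ∧ (inner ℝ v w : ℝ) = 0 := by
    intro n
    set K := LinearMap.ker (sympEmap ((f n : Matrix ι ι ℝ) - lam n • 1)) with hK
    have h2 : 1 < Module.finrank ℝ K := hdim n
    let b := stdOrthonormalBasis ℝ K
    refine ⟨b ⟨0, by omega⟩, b ⟨1, h2⟩, (b ⟨0, by omega⟩).2, (b ⟨1, h2⟩).2, ?_, ?_, ?_⟩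
    · exact b.orthonormal.1 ⟨0, by omega⟩
    · exact b.orthonormal.1 ⟨1, h2⟩
    · have := b.orthonormal.2 (i := ⟨0, by omega⟩) (j := ⟨1, h2⟩) (by simp)
      exact this
  choose v w hvK hwK hv1 hw1 hvw using hpair
  -- eigen equations
  have heig : ∀ n, sympEmap (f n : Matrix ι ι ℝ) (v n) = lam n • v n := by
    intro n
    have h0 := hvK n
    rw [LinearMap.mem_ker, sympEmap_sub, sympEmap_smul_one, sub_eq_zero] at h0
    exact h0
  -- convergence of the underlying matrices
  have hco : Filter.Tendsto (fun n => (f n : Matrix ι ι ℝ)) Filter.atTop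
      (nhds (S : Matrix ι ι ℝ)) :=
    (continuous_subtype_val.tendsto S).comp htend
  -- upper bound for the eigenvalues
  set a : ℕ → ℝ := fun n => ‖sympEmapCLM (f n : Matrix ι ι ℝ)‖ with ha_def
  have ha : Filter.Tendsto a Filter.atTop (nhds ‖sympEmapCLM (S : Matrix ι ι ℝ)‖) :=
    (((continuous_sympEmapCLM (ι := ι)).tendsto _).comp hco).norm
  obtain ⟨M0, hM0⟩ := ha.bddAbove_range
  have hM0' : ∀ n, a n ≤ M0 := fun n => hM0 ⟨n, rfl⟩
  have hup : ∀ n, lam n ≤ a n := by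
    intro n
    have h1 : ‖sympEmapCLM (f n : Matrix ι ι ℝ) (v n)‖ = lam n := by
      rw [sympEmapCLM_apply, heig n, norm_smul, hv1 n, Real.norm_eq_abs,
        abs_of_pos (hpos n), mul_one]
    calc lam n = ‖sympEmapCLM (f n : Matrix ι ι ℝ) (v n)‖ := h1.symm
      _ ≤ ‖sympEmapCLM (f n : Matrix ι ι ℝ)‖ * ‖v n‖ :=
          (sympEmapCLM (f n : Matrix ι ι ℝ)).le_opNorm (v n)
      _ = a n := by rw [hv1 n, mul_one]
  -- left inverse matrices and the lower bound
  set Binv : Matrix ι ι ℝ → Matrix ι ι ℝ := fun A => (-Jm) * Aᵀ * Jm with hBinv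
  have hBA : ∀ n, Binv (f n : Matrix ι ι ℝ) * (f n : Matrix ι ι ℝ) = 1 := by
    intro n
    have hsymp : (f n : Matrix ι ι ℝ)ᵀ * Jm * (f n : Matrix ι ι ℝ) = Jm := (f n).2
    calc (-Jm) * (f n : Matrix ι ι ℝ)ᵀ * Jm * (f n : Matrix ι ι ℝ)
        = (-Jm) * ((f n : Matrix ι ι ℝ)ᵀ * Jm * (f n : Matrix ι ι ℝ)) := by
          rw [Matrix.mul_assoc, Matrix.mul_assoc, Matrix.mul_assoc]
      _ = (-Jm) * Jm := by rw [hsymp]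
      _ = 1 := by rw [Matrix.neg_mul, hJ2, neg_neg]
  set bseq : ℕ → ℝ := fun n => ‖sympEmapCLM (Binv (f n : Matrix ι ι ℝ))‖ with hbseq
  have hBcont : Continuous Binv := by
    exact (continuous_const.matrix_mul continuous_id.matrix_transpose).matrix_mul
      continuous_const
  have hb : Filter.Tendsto bseq Filter.atTop
      (nhds ‖sympEmapCLM (Binv (S : Matrix ι ι ℝ))‖) :=
    (((continuous_sympEmapCLM (ι := ι)).tendsto _).comp ((hBcont.tendsto _).comp hco)).norm
  obtain ⟨M1, hM1⟩ := hb.bddAbove_range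
  have hM1' : ∀ n, bseq n ≤ M1 := fun n => hM1 ⟨n, rfl⟩
  have hlow : ∀ n, 1 ≤ lam n * bseq n := by
    intro n
    have hv : sympEmap (Binv (f n : Matrix ι ι ℝ)) (sympEmap (f n : Matrix ι ι ℝ) (v n))
        = v n := by
      rw [← sympEmap_mul, hBA n, sympEmap_one]
    rw [heig n, LinearMap.map_smul] at hv
    have h1 : (1 : ℝ) = ‖lam n • sympEmap (Binv (f n : Matrix ι ι ℝ)) (v n)‖ := by
      rw [hv, hv1 n]
    rw [norm_smul, Real.norm_eq_abs, abs_of_pos (hpos n)] at h1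
    calc (1 : ℝ) = lam n * ‖sympEmap (Binv (f n : Matrix ι ι ℝ)) (v n)‖ := h1
      _ ≤ lam n * (bseq n * ‖v n‖) := by
          refine mul_le_mul_of_nonneg_left ?_ (le_of_lt (hpos n))
          exact (sympEmapCLM (Binv (f n : Matrix ι ι ℝ))).le_opNorm (v n)
      _ = lam n * bseq n := by rw [hv1 n, mul_one]
  have hM1pos : 0 < M1 := by
    have h1 := hlow 0
    have h2 := hM1' 0
    have h3 := hpos 0
    have h4 := hup 0
    have h5 := hM0' 0
    nlinarith
  have hclow : ∀ n, 1 / M1 ≤ lam n := by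
    intro n
    rw [div_le_iff₀ hM1pos]
    calc (1 : ℝ) ≤ lam n * bseq n := hlow n
      _ ≤ lam n * M1 := mul_le_mul_of_nonneg_left (hM1' n) (le_of_lt (hpos n))
  -- compactness
  set Kset : Set (ℝ × EuclideanSpace ℝ ι × EuclideanSpace ℝ ι) :=
    Set.Icc (1 / M1) M0 ×ˢ (Metric.sphere (0 : EuclideanSpace ℝ ι) 1 ×ˢ
      Metric.sphere (0 : EuclideanSpace ℝ ι) 1) with hKset
  have hKc : IsCompact Kset :=
    (isCompact_Icc).prod ((isCompact_sphere (0 : EuclideanSpace ℝ ι) 1).prod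
      (isCompact_sphere (0 : EuclideanSpace ℝ ι) 1))
  have hu : ∀ n, (lam n, v n, w n) ∈ Kset := by
    intro n
    refine ⟨⟨hclow n, le_trans (hup n) (hM0' n)⟩, ?_, ?_⟩
    · exact mem_sphere_zero_iff_norm.mpr (hv1 n)
    · exact mem_sphere_zero_iff_norm.mpr (hw1 n)
  obtain ⟨L, hLmem, φ, hφmono, hφtend⟩ := hKc.tendsto_subseq hu
  have hl : Filter.Tendsto (fun n => lam (φ n)) Filter.atTop (nhds L.1) :=
    (continuous_fst.tendsto _).comp hφtend
  have hV : Filter.Tendsto (fun n => v (φ n)) Filter.atTop (nhds L.2.1) :=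
    ((continuous_fst.comp continuous_snd).tendsto _).comp hφtend
  have hW : Filter.Tendsto (fun n => w (φ n)) Filter.atTop (nhds L.2.2) :=
    ((continuous_snd.comp continuous_snd).tendsto _).comp hφtend
  have hcoφ : Filter.Tendsto (fun n => (f (φ n) : Matrix ι ι ℝ)) Filter.atTop
      (nhds (S : Matrix ι ι ℝ)) := hco.comp hφmono.tendsto_atTop
  -- the limit matrix sequence
  have hAn : Filter.Tendsto (fun n => (f (φ n) : Matrix ι ι ℝ) - lam (φ n) • 1)
      Filter.atTop (nhds ((S : Matrix ι ι ℝ) - L.1 • 1)) :=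
    hcoφ.sub (hl.smul tendsto_const_nhds)
  have hkerlim : ∀ (z : ℕ → EuclideanSpace ℝ ι) (Z : EuclideanSpace ℝ ι),
      Filter.Tendsto z Filter.atTop (nhds Z) →
      (∀ n, z n ∈ LinearMap.ker (sympEmap ((f (φ n) : Matrix ι ι ℝ) - lam (φ n) • 1))) →
      Z ∈ LinearMap.ker (sympEmap ((S : Matrix ι ι ℝ) - L.1 • 1)) := by
    intro z Z hz hzker
    have hz' : Filter.Tendsto (fun n => sympAuxEqv ι (z n)) Filter.atTop
        (nhds (sympAuxEqv ι Z)) :=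
      (((sympAuxEqv ι).toLinearMap.continuous_of_finiteDimensional).tendsto Z).comp hz
    have hmv : Filter.Tendsto
        (fun n => ((f (φ n) : Matrix ι ι ℝ) - lam (φ n) • 1) *ᵥ (sympAuxEqv ι (z n)))
        Filter.atTop (nhds (((S : Matrix ι ι ℝ) - L.1 • 1) *ᵥ (sympAuxEqv ι Z))) := by
      have hcont : Continuous (fun p : Matrix ι ι ℝ × (ι → ℝ) => p.1 *ᵥ p.2) :=
        continuous_fst.matrix_mulVec continuous_snd
      exact (hcont.tendsto _).comp (hAn.prodMk_nhds hz')
    have hzero : (fun n => ((f (φ n) : Matrix ι ι ℝ) - lam (φ n) • 1) *ᵥ (sympAuxEqv ι (z n)))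
        = fun _ => (0 : ι → ℝ) := by
      funext n
      have h := hzker n
      rw [LinearMap.mem_ker, sympEmap_apply] at h
      exact (LinearEquiv.map_eq_zero_iff _).mp h
    rw [hzero] at hmv
    have h0 := tendsto_nhds_unique hmv tendsto_const_nhds
    rw [LinearMap.mem_ker, sympEmap_apply, h0, map_zero]
  have hVker := hkerlim _ _ hV (fun n => hvK (φ n))
  have hWker := hkerlim _ _ hW (fun n => hwK (φ n))
  -- limit vectors are orthonormal
  have hVnorm : ‖L.2.1‖ = 1 := by
    exact mem_sphere_zero_iff_norm.mp hLmem.2.1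
  have hWnorm : ‖L.2.2‖ = 1 := by
    exact mem_sphere_zero_iff_norm.mp hLmem.2.2
  have hVWinner : (inner ℝ L.2.1 L.2.2 : ℝ) = 0 := by
    have hin : Filter.Tendsto (fun n => (inner ℝ (v (φ n)) (w (φ n)) : ℝ))
        Filter.atTop (nhds (inner ℝ L.2.1 L.2.2 : ℝ)) := hV.inner hW
    have : (fun n => (inner ℝ (v (φ n)) (w (φ n)) : ℝ)) = fun _ => (0 : ℝ) := by
      funext n; exact hvw (φ n)
    rw [this] at hin
    exact tendsto_nhds_unique hin tendsto_const_nhds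
  -- linear independence
  have hV0 : L.2.1 ≠ 0 := by
    intro h
    rw [h, norm_zero] at hVnorm
    norm_num at hVnorm
  have hind : LinearIndependent ℝ ![L.2.1, L.2.2] := by
    rw [LinearIndependent.pair_iff' hV0]
    intro a h
    have h1 : (inner ℝ L.2.1 L.2.2 : ℝ) = a * (‖L.2.1‖ * ‖L.2.1‖) := by
      rw [← h, real_inner_smul_right, real_inner_self_eq_norm_mul_norm]
    rw [hVWinner, hVnorm] at h1
    have ha0 : a = 0 := by nlinarith
    rw [ha0, zero_smul] at h
    rw [← h, norm_zero] at hWnorm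
    norm_num at hWnorm
  have hspan : Submodule.span ℝ (Set.range ![L.2.1, L.2.2])
      ≤ LinearMap.ker (sympEmap ((S : Matrix ι ι ℝ) - L.1 • 1)) := by
    rw [Submodule.span_le]
    rintro x ⟨i, rfl⟩
    fin_cases i
    · exact hVker
    · exact hWker
  have h2 : 2 ≤ Module.finrank ℝ
      (LinearMap.ker (sympEmap ((S : Matrix ι ι ℝ) - L.1 • 1))) := by
    have hcard := finrank_span_eq_card hind
    have hle := Submodule.finrank_mono hspan
    simp only [hcard] at hle
    simpa using hle
  have hLpos : 0 < L.1 := lt_of_lt_of_le (by positivity) hLmem.1.1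
  refine ⟨L.1, hLpos, ?_⟩
  have := finrank_ker_sympEmap ((S : Matrix ι ι ℝ) - L.1 • 1)
  omega


/-- Within the real symplectic group `Sp(2N, ℝ)` (with the subspace
topology from the space of `2N×2N` real matrices), the set of matrices all of whose
positive real eigenvalues have geometric multiplicity at most `1` is open. -/
theorem isOpen_symplectic_geomMult_le_one
    (N : ℕ) (hN : 1 ≤ N) :
    IsOpen {S : {A : Matrix (Fin N ⊕ Fin N) (Fin N ⊕ Fin N) ℝ //
        Aᵀ * Matrix.J (Fin N) ℝ * A = Matrix.J (Fin N) ℝ} |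
      ∀ lam : ℝ, 0 < lam →
        Module.finrank ℝ ↥(LinearMap.ker
          ((S : Matrix (Fin N ⊕ Fin N) (Fin N ⊕ Fin N) ℝ)
            - lam • (1 : Matrix (Fin N ⊕ Fin N) (Fin N ⊕ Fin N) ℝ)).mulVecLin) ≤ 1} :=
  symp_isOpen_aux (Matrix.J (Fin N) ℝ) (Matrix.J_squared (Fin N) ℝ)
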